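/- arXiv:2001.11999 — 5 statements merged into one kernel-verified Lean document; each statement's English description precedes it below -/
import Mathlib

section
/- Let d, v be natural numbers with d+1 ≤ v. Let ℱ and ℱ̄ be two collections of (d+1)-element subsets of {1,…,v} and let Δ : ℱ̄ → {−1,+1}. Let M be the set of real v×(d+1) matrices X of rank d+1 such that det X_J = 0 for every J ∈ ℱ and such that there exists ε ∈ {−1,+1} with ε·Δ_J·det X_J > 0 for every J ∈ ℱ̄, and let G be the set of (d+1)-dimensional subspaces Λ ⊆ ℝ^v admitting a basis matrix X with det X_J = 0 for all J ∈ ℱ and Δ_J·det X_J > 0 for all J ∈ ℱ̄. Call two real v×d matrices Q, Q′ affinely equivalent if there exist A ∈ GL_d(ℝ) and b ∈ ℝ^d such that every row of Q′ is obtained from the corresponding row of Q by q ↦ A·q + b. Then the map Q ↦ col([𝟙 | Q]) (the column space of the v×(d+1) matrix whose first column is the all-ones vector 𝟙 and whose remaining columns are those of Q) induces a bijection between the affine-equivalence classes of matrices Q ∈ ℝ^{v×d} with [𝟙 | Q] ∈ M and the set of subspaces Λ ∈ G containing the all-ones vector 𝟙. -/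
open Matrix

/-- The maximal minor (Plücker coordinate) of a `v × k` matrix given by the rows
indexed by a `k`-element subset `J`, taken in increasing order. -/
noncomputable def plk {v k : ℕ} (X : Matrix (Fin v) (Fin k) ℝ) (J : Finset (Fin v)) : ℝ :=
  if h : J.card = k then (X.submatrix (fun i => ((J.orderIsoOfFin h) i : Fin v)) id).det else 0

/-- The column space of a matrix. -/
noncomputable def colSpace {v k : ℕ} (X : Matrix (Fin v) (Fin k) ℝ) :
    Submodule ℝ (Fin v → ℝ) :=
  LinearMap.range X.mulVecLin

/-- The matrix `[𝟙 | Q]`: first column all ones, remaining columns those of `Q`. -/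
def aug {v d : ℕ} (Q : Matrix (Fin v) (Fin d) ℝ) : Matrix (Fin v) (Fin (d + 1)) ℝ :=
  Matrix.of fun i j => Fin.cases (1 : ℝ) (fun k => Q i k) j

/-- Two `v × d` matrices are affinely equivalent if their rows are related by a fixed
invertible affine transformation `q ↦ A q + b`. -/
def affEquiv {v d : ℕ} (Q Q' : Matrix (Fin v) (Fin d) ℝ) : Prop :=
  ∃ A : Matrix (Fin d) (Fin d) ℝ, IsUnit A.det ∧
    ∃ b : Fin d → ℝ, ∀ i, Q' i = A.mulVec (Q i) + b



lemma plk_mul {v k : ℕ} (X : Matrix (Fin v) (Fin k) ℝ) (B : Matrix (Fin k) (Fin k) ℝ)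
    (J : Finset (Fin v)) : plk (X * B) J = plk X J * B.det := by
  unfold plk
  split
  · rw [← Matrix.det_mul]
    congr 1
  · simp

lemma colSpace_mul {v k : ℕ} (X : Matrix (Fin v) (Fin k) ℝ) (B : Matrix (Fin k) (Fin k) ℝ)
    (hB : IsUnit B.det) : colSpace (X * B) = colSpace X := by
  unfold colSpace
  rw [Matrix.mulVecLin_mul]
  refine LinearMap.range_comp_of_range_eq_top _ (LinearMap.range_eq_top.mpr fun y => ?_)
  exact ⟨(B⁻¹).mulVecLin y, by
    simp [Matrix.mulVecLin_apply, Matrix.mulVec_mulVec, Matrix.mul_nonsing_inv _ hB]⟩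

lemma finrank_colSpace {v k : ℕ} (X : Matrix (Fin v) (Fin k) ℝ) :
    Module.finrank ℝ ↥(colSpace X) = X.rank := rfl

lemma inj_of_rank {v k : ℕ} (X : Matrix (Fin v) (Fin k) ℝ) (h : X.rank = k) :
    Function.Injective X.mulVecLin := by
  rw [← LinearMap.ker_eq_bot]
  have h2 := X.mulVecLin.finrank_range_add_finrank_ker
  rw [show Module.finrank ℝ ↥(LinearMap.range X.mulVecLin) = X.rank from rfl, h,
    Module.finrank_pi] at h2
  have : Module.finrank ℝ ↥(LinearMap.ker X.mulVecLin) = 0 := by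
    simpa using h2
  exact Submodule.finrank_eq_zero.mp this

lemma matrix_left_cancel {v k l : ℕ} (X : Matrix (Fin v) (Fin k) ℝ)
    (hX : Function.Injective X.mulVecLin) {M N : Matrix (Fin k) (Fin l) ℝ}
    (h : X * M = X * N) : M = N := by
  ext i j
  have h1 : X.mulVecLin (fun r => M r j) = X.mulVecLin (fun r => N r j) := by
    ext r
    have := congr_fun (congr_fun h r) j
    simpa [Matrix.mul_apply, Matrix.mulVecLin_apply, Matrix.mulVec, dotProduct] using this
  exact congr_fun (hX h1) i

lemma det_first_col_single {k : ℕ} (C : Matrix (Fin (k+1)) (Fin (k+1)) ℝ)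
    (hC : ∀ i, C i 0 = if i = 0 then (1:ℝ) else 0) :
    C.det = (C.submatrix Fin.succ Fin.succ).det := by
  rw [Matrix.det_succ_column_zero, Finset.sum_eq_single 0]
  · simp [hC, Fin.succAbove_zero]
  · intro i _ hi
    simp [hC, hi]
  · simp

lemma exists_unit_matrix_col {k : ℕ} (c : Fin (k+1) → ℝ) (hc : c ≠ 0) :
    ∃ B : Matrix (Fin (k+1)) (Fin (k+1)) ℝ, IsUnit B.det ∧ ∀ i, B i 0 = c i := by
  obtain ⟨j, hj⟩ : ∃ j, c j ≠ 0 := by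
    by_contra h; push_neg at h; exact hc (funext h)
  refine ⟨(Matrix.updateCol 1 j c).submatrix id (Equiv.swap 0 j), ?_, ?_⟩
  · rw [Matrix.det_permute']
    have h1 : (Matrix.updateCol (1 : Matrix _ _ ℝ) j c).det = c j := by
      rw [← Matrix.cramer_apply, Matrix.cramer_one]
      rfl
    rw [h1, isUnit_iff_ne_zero]
    refine mul_ne_zero ?_ hj
    rcases Int.units_eq_one_or (Equiv.Perm.sign (Equiv.swap (0 : Fin (k+1)) j)) with h | h <;>
      simp [h]
  · intro i
    simp [Matrix.submatrix_apply, Equiv.swap_apply_left, Matrix.updateCol_apply]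

lemma exists_factor {v k l : ℕ} (X : Matrix (Fin v) (Fin k) ℝ) (Y : Matrix (Fin v) (Fin l) ℝ)
    (h : ∀ j, (fun i => Y i j) ∈ colSpace X) : ∃ C : Matrix (Fin k) (Fin l) ℝ, Y = X * C := by
  choose c hc using h
  refine ⟨Matrix.of fun i j => c j i, ?_⟩
  ext i j
  have := congr_fun (hc j) i
  simp only [Matrix.mulVecLin_apply] at this
  rw [Matrix.mul_apply]
  simpa [Matrix.mulVec, dotProduct] using this.symm

lemma col_mem_colSpace {v k : ℕ} (X : Matrix (Fin v) (Fin k) ℝ) (j : Fin k) :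
    (fun i => X i j) ∈ colSpace X :=
  ⟨Pi.single j 1, by ext i; simp [Matrix.mulVecLin_apply, Matrix.mulVec_single]⟩

lemma aug_apply_zero {v d : ℕ} (Q : Matrix (Fin v) (Fin d) ℝ) (i : Fin v) :
    aug Q i 0 = 1 := rfl

lemma aug_apply_succ {v d : ℕ} (Q : Matrix (Fin v) (Fin d) ℝ) (i : Fin v) (k : Fin d) :
    aug Q i k.succ = Q i k := rfl

lemma aug_mulVec_single {v d : ℕ} (Q : Matrix (Fin v) (Fin d) ℝ) :
    (aug Q).mulVec (Pi.single 0 1) = 1 := by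
  ext i
  simp [Matrix.mulVec_single, aug_apply_zero]
/-- Corollary (polytopeGrassequiv): `Q ↦ col [𝟙 | Q]` induces a bijection between
affine-equivalence classes of matrices `Q` with `[𝟙|Q] ∈ M` and the subspaces in `G`
containing the all-ones vector. -/
theorem stmt1 (d v : ℕ) (hdv : d + 1 ≤ v)
    (ℱ ℱbar : Set (Finset (Fin v)))
    (hℱ : ∀ J ∈ ℱ, J.card = d + 1) (hℱbar : ∀ J ∈ ℱbar, J.card = d + 1)
    (Δ : Finset (Fin v) → ℝ) (hΔ : ∀ J ∈ ℱbar, Δ J = 1 ∨ Δ J = -1)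
    (M : Set (Matrix (Fin v) (Fin (d + 1)) ℝ))
    (hM : M = {X | X.rank = d + 1 ∧ (∀ J ∈ ℱ, plk X J = 0) ∧
      ∃ ε : ℝ, (ε = 1 ∨ ε = -1) ∧ ∀ J ∈ ℱbar, 0 < ε * (Δ J * plk X J)})
    (G : Set (Submodule ℝ (Fin v → ℝ)))
    (hG : G = {Λ : Submodule ℝ (Fin v → ℝ) | Module.finrank ℝ ↥Λ = d + 1 ∧
      ∃ X : Matrix (Fin v) (Fin (d + 1)) ℝ, colSpace X = Λ ∧ X.rank = d + 1 ∧
        (∀ J ∈ ℱ, plk X J = 0) ∧ ∀ J ∈ ℱbar, 0 < Δ J * plk X J}) :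
    (∀ Q : Matrix (Fin v) (Fin d) ℝ, aug Q ∈ M →
      colSpace (aug Q) ∈ G ∧ (1 : Fin v → ℝ) ∈ colSpace (aug Q)) ∧
    (∀ Λ ∈ G, (1 : Fin v → ℝ) ∈ Λ →
      ∃ Q : Matrix (Fin v) (Fin d) ℝ, aug Q ∈ M ∧ colSpace (aug Q) = Λ) ∧
    (∀ Q Q' : Matrix (Fin v) (Fin d) ℝ, aug Q ∈ M → aug Q' ∈ M →
      (colSpace (aug Q) = colSpace (aug Q') ↔ affEquiv Q Q')) := by
  subst hM hG
  refine ⟨?_, ?_, ?_⟩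
  -- Part 1
  · rintro Q ⟨hrank, hF, ε, hε, hεpos⟩
    have h1 : (1 : Fin v → ℝ) ∈ colSpace (aug Q) :=
      ⟨Pi.single 0 1, aug_mulVec_single Q⟩
    refine ⟨⟨?_, ?_⟩, h1⟩
    · rw [finrank_colSpace, hrank]
    · rcases hε with rfl | rfl
      · exact ⟨aug Q, rfl, hrank, hF, fun J hJ => by simpa using hεpos J hJ⟩
      · have hdet : (Matrix.diagonal (fun l : Fin (d+1) =>
            if l = 0 then (-1:ℝ) else 1)).det = -1 := by
          rw [Matrix.det_diagonal]
          simp [Finset.prod_ite_eq']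
        have hu : IsUnit (Matrix.diagonal (fun l : Fin (d+1) =>
            if l = 0 then (-1:ℝ) else 1)).det := by
          rw [hdet]; exact isUnit_one.neg
        refine ⟨aug Q * Matrix.diagonal (fun l => if l = 0 then (-1:ℝ) else 1),
          colSpace_mul _ _ hu, ?_, ?_, ?_⟩
        · rw [Matrix.rank_mul_eq_left_of_isUnit_det _ _ hu, hrank]
        · intro J hJ; rw [plk_mul, hF J hJ, zero_mul]
        · intro J hJ
          have h2 := hεpos J hJ
          rw [plk_mul, hdet]
          nlinarith [h2]
  -- Part 2
  · rintro Λ ⟨hfr, X, hcolX, hrX, hFX, hFbarX⟩ h1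
    rw [← hcolX] at h1
    obtain ⟨c, hc⟩ := h1
    have hc0 : c ≠ 0 := by
      rintro rfl
      have h2 : (0 : Fin v → ℝ) = 1 := by simpa using hc
      exact one_ne_zero (congr_fun h2.symm ⟨0, lt_of_lt_of_le (Nat.succ_pos d) hdv⟩)
    obtain ⟨B, hB, hBcol⟩ := exists_unit_matrix_col c hc0
    have haug : aug (Matrix.of fun i k => (X * B) i k.succ) = X * B := by
      ext i j
      refine Fin.cases ?_ (fun k => rfl) j
      show (1:ℝ) = (X * B) i 0
      have h3 : (X * B) i 0 = X.mulVec c i := by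
        simp [Matrix.mul_apply, Matrix.mulVec, dotProduct, hBcol]
      rw [h3]
      have h4 := congr_fun hc i
      simpa [Matrix.mulVecLin_apply] using h4.symm
    have hd0 : B.det ≠ 0 := hB.ne_zero
    refine ⟨Matrix.of fun i k => (X * B) i k.succ, ⟨?_, ?_, ?_⟩, ?_⟩
    · rw [haug, Matrix.rank_mul_eq_left_of_isUnit_det _ _ hB, hrX]
    · intro J hJ; rw [haug, plk_mul, hFX J hJ, zero_mul]
    · rcases lt_or_gt_of_ne hd0 with hneg | hpos
      · refine ⟨-1, Or.inr rfl, fun J hJ => ?_⟩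
        rw [haug, plk_mul]
        have h5 := hFbarX J hJ
        nlinarith
      · refine ⟨1, Or.inl rfl, fun J hJ => ?_⟩
        rw [haug, plk_mul]
        have h5 := hFbarX J hJ
        nlinarith
    · rw [haug, colSpace_mul _ _ hB, hcolX]
  -- Part 3
  · intro Q Q' hQ hQ'
    obtain ⟨hrk, -, -⟩ := hQ
    obtain ⟨hrk', -, -⟩ := hQ'
    have hinj := inj_of_rank _ hrk
    constructor
    · intro hcol
      obtain ⟨C, hC⟩ := exists_factor (aug Q) (aug Q')
        (fun j => hcol ▸ col_mem_colSpace (aug Q') j)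
      obtain ⟨C', hC'⟩ := exists_factor (aug Q') (aug Q)
        (fun j => hcol.symm ▸ col_mem_colSpace (aug Q) j)
      have hCC' : C * C' = 1 := by
        apply matrix_left_cancel (aug Q) hinj
        rw [Matrix.mul_one, ← Matrix.mul_assoc, ← hC, ← hC']
      have hunitC : IsUnit C.det := by
        have h6 := Matrix.det_mul C C'
        rw [hCC', Matrix.det_one] at h6
        exact IsUnit.of_mul_eq_one _ h6.symm
      have hcol0 : ∀ i, C i 0 = if i = 0 then (1:ℝ) else 0 := by
        have h7 : (aug Q).mulVecLin (fun r => C r 0)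
            = (aug Q).mulVecLin (Pi.single 0 1) := by
          ext i
          simp only [Matrix.mulVecLin_apply]
          rw [aug_mulVec_single]
          have h8 : (aug Q).mulVec (fun r => C r 0) i = (aug Q * C) i 0 := by
            simp [Matrix.mul_apply, Matrix.mulVec, dotProduct]
          rw [h8, ← hC, aug_apply_zero]
          rfl
        have h9 := hinj h7
        intro i
        rw [congr_fun h9 i, Pi.single_apply]
      refine ⟨(C.submatrix Fin.succ Fin.succ)ᵀ, ?_, fun l => C 0 l.succ, fun i => ?_⟩
      · rw [Matrix.det_transpose, ← det_first_col_single C hcol0]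
        exact hunitC
      · ext l
        have e := congr_fun (congr_fun hC i) l.succ
        rw [aug_apply_succ] at e
        rw [e, Matrix.mul_apply, Fin.sum_univ_succ, aug_apply_zero, one_mul]
        have h10 : ((C.submatrix Fin.succ Fin.succ)ᵀ.mulVec (Q i)) l
            = ∑ x : Fin d, aug Q i x.succ * C x.succ l.succ := by
          simp [Matrix.mulVec, dotProduct, aug_apply_succ, mul_comm]
        rw [Pi.add_apply, h10]
        ring
    · rintro ⟨A, hA, b, hQQ'⟩
      set C : Matrix (Fin (d+1)) (Fin (d+1)) ℝ := Matrix.of fun k l =>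
        Fin.cases (if k = 0 then (1:ℝ) else 0)
          (fun l' => Fin.cases (b l') (fun k' => A l' k') k) l with hCdef
      have hsub : C.submatrix Fin.succ Fin.succ = Aᵀ := by
        ext k' l'
        rfl
      have hcol0 : ∀ i, C i 0 = if i = 0 then (1:ℝ) else 0 := fun i => rfl
      have hCu : IsUnit C.det := by
        rw [det_first_col_single C hcol0, hsub, Matrix.det_transpose]
        exact hA
      have haug : aug Q' = aug Q * C := by
        ext i j
        refine Fin.cases ?_ (fun l => ?_) j
        · rw [aug_apply_zero, Matrix.mul_apply]
          have : ∀ k : Fin (d+1), aug Q i k * C k 0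
              = if k = 0 then aug Q i k else 0 := by
            intro k
            rw [hcol0 k]
            split <;> simp
          rw [Finset.sum_congr rfl fun k _ => this k, Finset.sum_ite_eq' _ _ _]
          simp [aug_apply_zero]
        · rw [aug_apply_succ, Matrix.mul_apply, Fin.sum_univ_succ, aug_apply_zero, one_mul]
          have e := congr_fun (hQQ' i) l
          rw [Pi.add_apply] at e
          rw [e]
          have h11 : C 0 l.succ = b l := rfl
          have h12 : ∀ x : Fin d, aug Q i x.succ * C x.succ l.succ = A l x * Q i x := by
            intro x
            rw [aug_apply_succ]
            show Q i x * A l x = A l x * Q i x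
            ring
          rw [h11, Finset.sum_congr rfl fun x _ => h12 x]
          show A.mulVec (Q i) l + b l = b l + ∑ x, A l x * Q i x
          rw [add_comm]
          rfl
      rw [haug, colSpace_mul _ _ hCu]
end

section
/- Fix integers d ≥ 1 and v, f with d+1 < v. Let Z be a zero pattern assigning to each column index j ∈ {1,…,f} a proper subset Z(j) ⊊ {1,…,v}, and let 𝒮 be the set of real v×f matrices S of rank d+1 such that S_{ij} = 0 if and only if i ∈ Z(j). Suppose S ∈ 𝒮 satisfies the facet-rank condition: for every j, the rows of S indexed by Z(j) span a d-dimensional subspace of ℝ^f. Then for any S′ ∈ 𝒮 the following are equivalent: (i) S and S′ have the same column space; (ii) there exist nonzero real numbers λ_1,…,λ_f such that for every j the j-th column of S′ equals λ_j times the j-th column of S. -/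
open Matrix

set_option maxHeartbeats 1000000
set_option synthInstance.maxHeartbeats 400000

/-- Theorem (slackGrassequiv, pointwise): for `S` in the "slack variety" `𝒮` satisfying the
facet-rank condition, a matrix `S'` in `𝒮` has the same column space as `S` iff `S'` is
obtained from `S` by scaling each column by a nonzero real. -/
theorem stmt3 (d v f : ℕ) (hd : 1 ≤ d) (hv : d + 1 < v)
    (Z : Fin f → Finset (Fin v)) (hZ : ∀ j, Z j ≠ Finset.univ)
    (𝒮 : Set (Matrix (Fin v) (Fin f) ℝ))
    (h𝒮 : 𝒮 = {S | S.rank = d + 1 ∧ ∀ i j, S i j = 0 ↔ i ∈ Z j})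
    (S : Matrix (Fin v) (Fin f) ℝ) (hS : S ∈ 𝒮)
    (hfacet : ∀ j, Module.finrank ℝ
      ↥(Submodule.span ℝ ((fun i => S i) '' (Z j : Set (Fin v)))) = d) :
    ∀ S' ∈ 𝒮, (colSpace S = colSpace S' ↔
      ∃ lam : Fin f → ℝ, (∀ j, lam j ≠ 0) ∧ ∀ i j, S' i j = lam j * S i j) := by
  subst h𝒮
  obtain ⟨hSrank, hSpat⟩ := hS
  intro S' hS'
  obtain ⟨hS'rank, hS'pat⟩ := hS'
  constructor
  · -- hard direction
    intro hcol
    have key : ∀ j : Fin f, ∃ c : ℝ, c ≠ 0 ∧ ∀ i, S' i j = c * S i j := by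
      intro j
      set W : Submodule ℝ (Fin v → ℝ) := LinearMap.range S.mulVecLin with hW
      -- finrank W = d + 1
      have hWrank : Module.finrank ℝ W = d + 1 := hSrank
      -- the projection onto coordinates in Z j
      let φ : (Fin v → ℝ) →ₗ[ℝ] (↥(Z j) → ℝ) :=
        LinearMap.funLeft ℝ ℝ (fun i : (Z j : Finset (Fin v)) => (i : Fin v))
      let M : Matrix ↥(Z j) (Fin f) ℝ := fun i => S i
      have hcomp : φ.comp S.mulVecLin = M.mulVecLin := by
        ext x i
        simp [φ, M, LinearMap.funLeft, mulVecLin, mulVec, dotProduct, Pi.single_apply, mul_ite]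
        change S i x = (M *ᵥ Pi.single x 1) i
        simp [M, mulVec, dotProduct, Pi.single_apply]
      -- rank of M is d
      have hMrank : M.rank = d := by
        have h1 : Mᵀ.rank = d := by
          rw [Matrix.rank, Matrix.range_mulVecLin, Matrix.col, Matrix.transpose_transpose]
          have : Set.range M = (fun i => S i) '' (Z j : Set (Fin v)) := by
            rw [Set.image_eq_range]; rfl
          rw [this]
          exact hfacet j
        rw [← Matrix.rank_transpose]; exact h1
      -- restriction of φ to W
      let ρ : W →ₗ[ℝ] (↥(Z j) → ℝ) := φ.comp W.subtype
      have hρrange : LinearMap.range ρ = LinearMap.range M.mulVecLin := by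
        rw [← hcomp]
        rw [LinearMap.range_comp, LinearMap.range_comp, Submodule.range_subtype]
      have hρrank : Module.finrank ℝ (LinearMap.range ρ) = d := by
        rw [hρrange]; exact hMrank
      have hker : Module.finrank ℝ (LinearMap.ker ρ) = 1 := by
        have := LinearMap.finrank_range_add_finrank_ker ρ
        rw [hρrank, hWrank] at this
        omega
      -- column j of S is a nonzero element of ker ρ
      have hcolW : ∀ T : Matrix (Fin v) (Fin f) ℝ,
          (fun i => T i j) ∈ LinearMap.range T.mulVecLin := by
        intro T
        refine ⟨Pi.single j 1, ?_⟩
        ext i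
        simp [mulVecLin, Matrix.mulVec_single]
      have huW : (fun i => S i j) ∈ W := hcolW S
      have hu'W : (fun i => S' i j) ∈ W := by
        rw [hW, show LinearMap.range S.mulVecLin = colSpace S from rfl, hcol]
        exact hcolW S'
      set uu : W := ⟨fun i => S i j, huW⟩ with huu
      set uu' : W := ⟨fun i => S' i j, hu'W⟩ with huu'
      have hmemker : ∀ T : Matrix (Fin v) (Fin f) ℝ, (∀ i k, T i k = 0 ↔ i ∈ Z k) →
          ∀ w : W, ((w : Fin v → ℝ) = fun i => T i j) → w ∈ LinearMap.ker ρ := by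
        intro T hT w hw
        rw [LinearMap.mem_ker]
        ext i
        simp only [ρ, φ, LinearMap.comp_apply, Submodule.subtype_apply, LinearMap.funLeft_apply,
          hw, Pi.zero_apply]
        exact (hT i.1 j).2 i.2
      have huker : uu ∈ LinearMap.ker ρ := hmemker S hSpat uu rfl
      have hu'ker : uu' ∈ LinearMap.ker ρ := hmemker S' hS'pat uu' rfl
      -- nonzero columns
      have hnz : ∃ i : Fin v, i ∉ Z j := by
        by_contra h
        push_neg at h
        exact hZ j (Finset.eq_univ_iff_forall.2 h)
      obtain ⟨i0, hi0⟩ := hnz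
      have huNZ : (⟨uu, huker⟩ : LinearMap.ker ρ) ≠ 0 := by
        intro h
        apply hi0
        have : S i0 j = 0 := by
          have := congrArg (fun w : LinearMap.ker ρ => ((w : W) : Fin v → ℝ) i0) h
          simpa [huu] using this
        exact (hSpat i0 j).1 this
      obtain ⟨c, hc⟩ := (finrank_eq_one_iff_of_nonzero' (⟨uu, huker⟩ : LinearMap.ker ρ)
        huNZ).1 hker ⟨uu', hu'ker⟩
      refine ⟨c, ?_, ?_⟩
      · intro hc0
        subst hc0
        have : S' i0 j = 0 := by
          have := congrArg (fun w : LinearMap.ker ρ => ((w : W) : Fin v → ℝ) i0) hc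
          simpa [huu'] using this.symm
        exact hi0 ((hS'pat i0 j).1 this)
      · intro i
        have := congrArg (fun w : LinearMap.ker ρ => ((w : W) : Fin v → ℝ) i) hc
        simpa [huu, huu'] using this.symm
    choose lam hlam0 hlam using key
    exact ⟨lam, hlam0, fun i j => hlam j i⟩
  · -- easy direction
    rintro ⟨lam, hlam, hcols⟩
    unfold colSpace
    apply le_antisymm
    · rintro _ ⟨x, rfl⟩
      refine ⟨fun j => (lam j)⁻¹ * x j, ?_⟩
      ext i
      simp only [mulVecLin_apply, mulVec, dotProduct, hcols]
      apply Finset.sum_congr rfl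
      intro j _
      rw [mul_mul_mul_comm, mul_inv_cancel₀ (hlam j), one_mul]
    · rintro _ ⟨x, rfl⟩
      refine ⟨fun j => lam j * x j, ?_⟩
      ext i
      simp only [mulVecLin_apply, mulVec, dotProduct, hcols]
      apply Finset.sum_congr rfl
      intro j _
      ring
end

section
/- Fix integers d ≥ 1 and v, f with d+1 < v. Let Z be a zero pattern assigning to each column index j ∈ {1,…,f} a proper subset Z(j) ⊊ {1,…,v}, and let 𝒮 be the set of real v×f matrices S of rank d+1 such that S_{ij} = 0 if and only if i ∈ Z(j). Let S, S′ ∈ 𝒮, where S satisfies the facet-rank condition (for every j the rows of S indexed by Z(j) span a d-dimensional subspace), and let B be a Gale transform of S and B′ a Gale transform of S′. Then the following are equivalent: (i) there exist nonzero reals λ_1,…,λ_f with S′ = S·diag(λ_1,…,λ_f); (ii) there exists A ∈ GL_{v−d−1}(ℝ) with B′ = B·A. -/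
open Matrix

/-- Rank-nullity for matrices. -/
lemma aux_rank_nullity {m n : Type*} [Fintype m] [Fintype n] (M : Matrix m n ℝ) :
    M.rank + Module.finrank ℝ (LinearMap.ker M.mulVecLin) = Fintype.card n := by
  have h := LinearMap.finrank_range_add_finrank_ker M.mulVecLin
  rw [Module.finrank_pi] at h
  exact h

/-- Dimension of the image of a submodule containing the kernel. -/
lemma aux_finrank_map {M N : Type*} [AddCommGroup M] [Module ℝ M] [AddCommGroup N]
    [Module ℝ N] [FiniteDimensional ℝ M] (φ : M →ₗ[ℝ] N) (C : Submodule ℝ M)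
    (h : LinearMap.ker φ ≤ C) :
    Module.finrank ℝ (C.map φ) + Module.finrank ℝ (LinearMap.ker φ)
      = Module.finrank ℝ C := by
  have h1 := LinearMap.finrank_range_add_finrank_ker (φ.domRestrict C)
  rw [LinearMap.range_domRestrict, LinearMap.ker_domRestrict,
    (Submodule.comapSubtypeEquivOfLe h).finrank_eq] at h1
  exact h1

/-- If `Nᵀ M = 0` and the ranks add up, the column space of `M` is the kernel of `Nᵀ`. -/
lemma aux_range_eq_ker {m n c : Type*} [Fintype m] [Fintype n] [Fintype c]
    (M : Matrix m n ℝ) (N : Matrix m c ℝ) (h : Nᵀ * M = 0)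
    (hr : M.rank + N.rank = Fintype.card m) :
    LinearMap.range M.mulVecLin = LinearMap.ker Nᵀ.mulVecLin := by
  have hle : LinearMap.range M.mulVecLin ≤ LinearMap.ker Nᵀ.mulVecLin := by
    rintro x ⟨y, rfl⟩
    simp only [LinearMap.mem_ker, Matrix.mulVecLin_apply, Matrix.mulVec_mulVec, h,
      Matrix.zero_mulVec]
  have h1 := aux_rank_nullity Nᵀ
  rw [Matrix.rank_transpose] at h1
  apply Submodule.eq_of_le_of_finrank_eq hle
  have : Module.finrank ℝ (LinearMap.range M.mulVecLin) = M.rank := rfl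
  omega

/-- Any vector in the column space of `S` vanishing on the zero set of column `j`
is a multiple of column `j`, assuming the facet-rank condition. -/
lemma aux_column {v f d : ℕ} (S : Matrix (Fin v) (Fin f) ℝ) (hSrank : S.rank = d + 1)
    (j : Fin f) (Zset : Finset (Fin v)) (hZne : Zset ≠ Finset.univ)
    (hSz : ∀ i, S i j = 0 ↔ i ∈ Zset)
    (hfacet : Module.finrank ℝ
      (Submodule.span ℝ ((fun i => S i) '' (Zset : Set (Fin v)))) = d)
    (x : Fin v → ℝ) (hx : x ∈ LinearMap.range S.mulVecLin) (hxz : ∀ i ∈ Zset, x i = 0) :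
    ∃ a : ℝ, x = a • (fun i => S i j) := by
  classical
  set R : Matrix ↥(Zset : Finset (Fin v)) (Fin f) ℝ := Matrix.of (fun i k => S i.1 k) with hR
  have hrange : Set.range (fun i : ↥Zset => S i.1) = (fun i => S i) '' (Zset : Set (Fin v)) := by
    ext y
    simp [Set.mem_image, Set.mem_range]
  have hRrank : R.rank = d := by
    rw [← Matrix.rank_transpose, Matrix.rank, Matrix.range_mulVecLin]
    have : Set.range Rᵀ.col = Set.range (fun i : ↥Zset => S i.1) := rfl
    rw [this, hrange, hfacet]
  have hCd : Module.finrank ℝ (LinearMap.ker R.mulVecLin) + d = f := by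
    have h := aux_rank_nullity R
    rw [hRrank, Fintype.card_fin] at h
    omega
  have hkerS := aux_rank_nullity S
  rw [hSrank, Fintype.card_fin] at hkerS
  have hle : LinearMap.ker S.mulVecLin ≤ LinearMap.ker R.mulVecLin := by
    intro c hc
    rw [LinearMap.mem_ker] at hc ⊢
    funext i
    show (fun k => S i.1 k) ⬝ᵥ c = 0
    have : (S *ᵥ c) i.1 = 0 := by rw [show S *ᵥ c = S.mulVecLin c from rfl, hc]; rfl
    exact this
  have hUdim := aux_finrank_map S.mulVecLin (LinearMap.ker R.mulVecLin) hle
  have hUone : Module.finrank ℝ ((LinearMap.ker R.mulVecLin).map S.mulVecLin) = 1 := by omega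
  have hScolU : (fun i => S i j) ∈ (LinearMap.ker R.mulVecLin).map S.mulVecLin := by
    refine Submodule.mem_map.2 ⟨Pi.single j 1, LinearMap.mem_ker.2 ?_, ?_⟩
    · show R *ᵥ Pi.single j 1 = 0
      rw [Matrix.mulVec_single_one]
      funext i
      exact (hSz i.1).2 i.2
    · show S *ᵥ Pi.single j 1 = _
      rw [Matrix.mulVec_single_one]
      rfl
  have hxU : x ∈ (LinearMap.ker R.mulVecLin).map S.mulVecLin := by
    obtain ⟨c, hc⟩ := hx
    refine Submodule.mem_map.2 ⟨c, LinearMap.mem_ker.2 ?_, hc⟩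
    show R *ᵥ c = 0
    funext i
    show (fun k => S i.1 k) ⬝ᵥ c = 0
    have : (S *ᵥ c) i.1 = x i.1 := by rw [show S *ᵥ c = S.mulVecLin c from rfl, hc]
    rw [show (fun k => S i.1 k) ⬝ᵥ c = (S *ᵥ c) i.1 from rfl, this]
    exact hxz i.1 i.2
  have hScol_ne : (fun i => S i j) ≠ 0 := by
    obtain ⟨i, hi⟩ : ∃ i, i ∉ Zset := by
      by_contra h
      push_neg at h
      exact hZne (Finset.eq_univ_iff_forall.2 h)
    intro h
    have : S i j = 0 := congrFun h i
    exact hi ((hSz i).1 this)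
  have hspan : Submodule.span ℝ {fun i => S i j}
      = (LinearMap.ker R.mulVecLin).map S.mulVecLin := by
    apply Submodule.eq_of_le_of_finrank_eq
    · rw [Submodule.span_le, Set.singleton_subset_iff]
      exact hScolU
    · rw [finrank_span_singleton hScol_ne, hUone]
  rw [← hspan, Submodule.mem_span_singleton] at hxU
  obtain ⟨a, ha⟩ := hxU
  exact ⟨a, ha.symm⟩

/-- Corollary (slackDgrassequiv, pointwise): two elements of the slack variety differ by a
column scaling iff their Gale transforms differ by right multiplication by an element of
`GL_{v-d-1}(ℝ)`. -/
theorem stmt6 (d v f : ℕ) (hd : 1 ≤ d) (hv : d + 1 < v)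
    (Z : Fin f → Finset (Fin v)) (hZ : ∀ j, Z j ≠ Finset.univ)
    (𝒮 : Set (Matrix (Fin v) (Fin f) ℝ))
    (h𝒮 : 𝒮 = {S | S.rank = d + 1 ∧ ∀ i j, S i j = 0 ↔ i ∈ Z j})
    (S S' : Matrix (Fin v) (Fin f) ℝ) (hS : S ∈ 𝒮) (hS' : S' ∈ 𝒮)
    (hfacet : ∀ j, Module.finrank ℝ
      ↥(Submodule.span ℝ ((fun i => S i) '' (Z j : Set (Fin v)))) = d)
    (B B' : Matrix (Fin v) (Fin (v - (d + 1))) ℝ)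
    (hB : B.rank = v - (d + 1)) (hBS : Bᵀ * S = 0)
    (hB' : B'.rank = v - (d + 1)) (hB'S' : B'ᵀ * S' = 0) :
    (∃ lam : Fin f → ℝ, (∀ j, lam j ≠ 0) ∧ S' = S * Matrix.diagonal lam) ↔
      ∃ A : Matrix (Fin (v - (d + 1))) (Fin (v - (d + 1))) ℝ, IsUnit A.det ∧ B' = B * A := by
  classical
  rw [h𝒮, Set.mem_setOf_eq] at hS hS'
  have hSB : Sᵀ * B = 0 := by
    have := congrArg Matrix.transpose hBS
    rwa [Matrix.transpose_mul, Matrix.transpose_transpose, Matrix.transpose_zero] at this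
  have hS'B' : S'ᵀ * B' = 0 := by
    have := congrArg Matrix.transpose hB'S'
    rwa [Matrix.transpose_mul, Matrix.transpose_transpose, Matrix.transpose_zero] at this
  constructor
  · -- column scaling implies Gale transforms related by GL
    rintro ⟨lam, hlam0, rfl⟩
    -- column spaces of B and B' coincide
    have h1 : LinearMap.range B.mulVecLin = LinearMap.ker Sᵀ.mulVecLin :=
      aux_range_eq_ker B S hSB (by rw [hB, hS.1, Fintype.card_fin]; omega)
    have h2 : LinearMap.range B'.mulVecLin
        = LinearMap.ker (S * Matrix.diagonal lam)ᵀ.mulVecLin :=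
      aux_range_eq_ker B' (S * Matrix.diagonal lam)
        (by
          have := congrArg Matrix.transpose hB'S'
          rwa [Matrix.transpose_mul, Matrix.transpose_transpose,
            Matrix.transpose_zero] at this)
        (by rw [hB', hS'.1, Fintype.card_fin]; omega)
    have hkerT : LinearMap.ker (S * Matrix.diagonal lam)ᵀ.mulVecLin
        = LinearMap.ker Sᵀ.mulVecLin := by
      ext x
      simp only [LinearMap.mem_ker, Matrix.mulVecLin_apply]
      rw [Matrix.transpose_mul, Matrix.diagonal_transpose, ← Matrix.mulVec_mulVec]
      constructor
      · intro h
        funext i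
        have hi := congrFun h i
        rw [Matrix.mulVec_diagonal] at hi
        have := mul_eq_zero.1 hi
        rcases this with h' | h'
        · exact absurd h' (hlam0 i)
        · exact h'
      · intro h
        rw [h, Matrix.mulVec_zero]
    have hrangeB : LinearMap.range B'.mulVecLin = LinearMap.range B.mulVecLin := by
      rw [h2, hkerT, ← h1]
    -- B has injective mulVec
    have hinjB : Function.Injective B.mulVecLin := by
      rw [← LinearMap.ker_eq_bot]
      have h := aux_rank_nullity B
      rw [hB, Fintype.card_fin] at h
      exact Submodule.finrank_eq_zero.1 (by omega)
    have hinjB' : Function.Injective B'.mulVecLin := by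
      rw [← LinearMap.ker_eq_bot]
      have h := aux_rank_nullity B'
      rw [hB', Fintype.card_fin] at h
      exact Submodule.finrank_eq_zero.1 (by omega)
    -- build the change of basis
    have hmem : ∀ x, B'.mulVecLin x ∈ LinearMap.range B.mulVecLin := by
      intro x
      rw [← hrangeB]
      exact LinearMap.mem_range_self _ x
    have hmem' : ∀ x, B.mulVecLin x ∈ LinearMap.range B'.mulVecLin := by
      intro x
      rw [hrangeB]
      exact LinearMap.mem_range_self _ x
    set eB := LinearEquiv.ofInjective B.mulVecLin hinjB with heB
    set eB' := LinearEquiv.ofInjective B'.mulVecLin hinjB' with heB'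
    set ψ := eB.symm.toLinearMap ∘ₗ
      (B'.mulVecLin.codRestrict (LinearMap.range B.mulVecLin) hmem) with hψdef
    set ψ' := eB'.symm.toLinearMap ∘ₗ
      (B.mulVecLin.codRestrict (LinearMap.range B'.mulVecLin) hmem') with hψ'def
    have hψ : ∀ x, B.mulVecLin (ψ x) = B'.mulVecLin x := by
      intro x
      calc B.mulVecLin (ψ x) = ↑(eB (ψ x)) := rfl
        _ = ↑(B'.mulVecLin.codRestrict (LinearMap.range B.mulVecLin) hmem x) := by
            rw [hψdef]
            show (↑(eB (eB.symm _)) : Fin v → ℝ) = _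
            rw [eB.apply_symm_apply]
        _ = B'.mulVecLin x := rfl
    have hψ' : ∀ x, B'.mulVecLin (ψ' x) = B.mulVecLin x := by
      intro x
      calc B'.mulVecLin (ψ' x) = ↑(eB' (ψ' x)) := rfl
        _ = ↑(B.mulVecLin.codRestrict (LinearMap.range B'.mulVecLin) hmem' x) := by
            rw [hψ'def]
            show (↑(eB' (eB'.symm _)) : Fin v → ℝ) = _
            rw [eB'.apply_symm_apply]
        _ = B.mulVecLin x := rfl
    set A := LinearMap.toMatrix' ψ with hAdef
    set A' := LinearMap.toMatrix' ψ' with hA'def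
    have hAx : ∀ x, A *ᵥ x = ψ x := by
      intro x
      rw [show A *ᵥ x = Matrix.toLin' A x from rfl, hAdef, Matrix.toLin'_toMatrix']
    have hA'x : ∀ x, A' *ᵥ x = ψ' x := by
      intro x
      rw [show A' *ᵥ x = Matrix.toLin' A' x from rfl, hA'def, Matrix.toLin'_toMatrix']
    have hBA : ∀ x, (B * A) *ᵥ x = B' *ᵥ x := by
      intro x
      rw [← Matrix.mulVec_mulVec, hAx]
      exact hψ x
    have hB'A' : ∀ x, (B' * A') *ᵥ x = B *ᵥ x := by
      intro x
      rw [← Matrix.mulVec_mulVec, hA'x]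
      exact hψ' x
    have hAA' : A * A' = 1 := by
      have hid : ∀ x, (A * A') *ᵥ x = x := by
        intro x
        apply hinjB
        show B *ᵥ ((A * A') *ᵥ x) = B *ᵥ x
        rw [Matrix.mulVec_mulVec, ← Matrix.mul_assoc]
        calc (B * A * A') *ᵥ x = (B * A) *ᵥ (A' *ᵥ x) := by
              rw [Matrix.mulVec_mulVec]
          _ = B' *ᵥ (A' *ᵥ x) := hBA _
          _ = (B' * A') *ᵥ x := by rw [Matrix.mulVec_mulVec]
          _ = B *ᵥ x := hB'A' _
      ext i k
      have h := congrFun (hid (Pi.single k 1)) i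
      rw [Matrix.mulVec_single_one] at h
      rw [show (A * A') i k = (A * A').col k i from rfl, h, Matrix.one_apply, Pi.single_apply]
    refine ⟨A, Matrix.isUnit_det_of_right_inverse hAA', ?_⟩
    ext i k
    have h := congrFun (hBA (Pi.single k 1)) i
    rw [Matrix.mulVec_single_one, Matrix.mulVec_single_one] at h
    exact h.symm
  · -- GL relation on Gale transforms implies column scaling
    rintro ⟨A, hA, hBA⟩
    have hW : LinearMap.range S.mulVecLin = LinearMap.ker Bᵀ.mulVecLin :=
      aux_range_eq_ker S B hBS (by rw [hB, hS.1, Fintype.card_fin]; omega)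
    have hW' : LinearMap.range S'.mulVecLin = LinearMap.ker B'ᵀ.mulVecLin :=
      aux_range_eq_ker S' B' hB'S' (by rw [hB', hS'.1, Fintype.card_fin]; omega)
    have hker : LinearMap.ker B'ᵀ.mulVecLin = LinearMap.ker Bᵀ.mulVecLin := by
      ext x
      simp only [LinearMap.mem_ker, Matrix.mulVecLin_apply]
      rw [hBA, Matrix.transpose_mul]
      constructor
      · intro h
        have h2 : Aᵀ⁻¹ *ᵥ ((Aᵀ * Bᵀ) *ᵥ x) = 0 := by rw [h, Matrix.mulVec_zero]
        rwa [Matrix.mulVec_mulVec, ← Matrix.mul_assoc,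
          Matrix.nonsing_inv_mul _ (by rwa [Matrix.det_transpose]), Matrix.one_mul] at h2
      · intro h
        rw [← Matrix.mulVec_mulVec, h, Matrix.mulVec_zero]
    have hrangeS : LinearMap.range S'.mulVecLin = LinearMap.range S.mulVecLin := by
      rw [hW', hker, ← hW]
    have hcols : ∀ j, ∃ a : ℝ, a ≠ 0 ∧ ∀ i, S' i j = a * S i j := by
      intro j
      obtain ⟨a, ha⟩ := aux_column S hS.1 j (Z j) (hZ j) (fun i => hS.2 i j) (hfacet j)
        (fun i => S' i j)
        (by
          rw [← hrangeS]
          exact ⟨Pi.single j 1, by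
            rw [Matrix.mulVecLin_apply, Matrix.mulVec_single_one]; rfl⟩)
        (fun i hi => (hS'.2 i j).2 hi)
      have ha' : ∀ i, S' i j = a * S i j := fun i => by
        have := congrFun ha i
        simpa using this
      refine ⟨a, ?_, ha'⟩
      obtain ⟨i, hi⟩ : ∃ i, i ∉ Z j := by
        by_contra h
        push_neg at h
        exact hZ j (Finset.eq_univ_iff_forall.2 h)
      intro h0
      have : S' i j = 0 := by rw [ha' i, h0, zero_mul]
      exact hi ((hS'.2 i j).1 this)
    choose lam hlam0 hlam using hcols
    refine ⟨lam, hlam0, ?_⟩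
    ext i j
    rw [Matrix.mul_diagonal, hlam j i, mul_comm]
end

section
/- Fix integers d ≥ 1 and v, f with d+1 < v. Let Z be a zero pattern assigning to each column index j ∈ {1,…,f} a proper subset Z(j) ⊊ {1,…,v}, and let 𝒮 be the set of real v×f matrices S of rank d+1 such that S_{ij} = 0 if and only if i ∈ Z(j). Let S, S′ ∈ 𝒮, where S satisfies the facet-rank condition (for every j the rows of S indexed by Z(j) span a d-dimensional subspace), and let B be a Gale transform of S and B′ a Gale transform of S′. Then the following are equivalent: (i) there exist an invertible diagonal v×v matrix D_r and nonzero reals λ_1,…,λ_f such that S′ = D_r·S·diag(λ_1,…,λ_f); (ii) there exist an invertible diagonal v×v matrix D and A ∈ GL_{v−d−1}(ℝ) such that B′ = D·B·A (equivalently, each row b′_i of B′ equals a nonzero scalar multiple of A ᵀ applied to the corresponding row b_i of B). -/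
open Matrix Module

private lemma rank_nullity'' {m : Type*} [Fintype m] {n : ℕ} (M : Matrix m (Fin n) ℝ) :
    M.rank + finrank ℝ (LinearMap.ker M.mulVecLin) = n := by
  rw [Matrix.rank]
  simpa using LinearMap.finrank_range_add_finrank_ker M.mulVecLin

private lemma isUnit_det_of_rank' {k : ℕ} (A : Matrix (Fin k) (Fin k) ℝ) (h : A.rank = k) :
    IsUnit A.det := by
  rw [← Matrix.isUnit_iff_isUnit_det, ← Matrix.mulVec_injective_iff_isUnit]
  have h2 := rank_nullity'' A
  have h3 : finrank ℝ (LinearMap.ker A.mulVecLin) = 0 := by omega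
  have hk := LinearMap.ker_eq_bot.mp (Submodule.finrank_eq_zero.mp h3)
  exact hk

private lemma mat_ext' {m n : ℕ} {M N : Matrix (Fin m) (Fin n) ℝ}
    (h : ∀ x, M.mulVec x = N.mulVec x) : M = N := by
  ext i j
  simpa [Matrix.mulVec_single] using congrFun (h (Pi.single j 1)) i

private lemma gale_factor {v k r f : ℕ} (hkr : k + r = v)
    (S : Matrix (Fin v) (Fin f) ℝ) (hSr : S.rank = r)
    (B C : Matrix (Fin v) (Fin k) ℝ) (hBr : B.rank = k) (hCr : C.rank = k)
    (hBS : Sᵀ * B = 0) (hCS : Sᵀ * C = 0) :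
    ∃ A : Matrix (Fin k) (Fin k) ℝ, IsUnit A.det ∧ B * A = C := by
  classical
  set K := LinearMap.ker (Sᵀ).mulVecLin with hK
  have hST : (Sᵀ).rank = r := by rw [Matrix.rank_transpose, hSr]
  have hKfin : finrank ℝ K = k := by
    have h2 := rank_nullity'' Sᵀ
    rw [← hK] at h2
    omega
  have key : ∀ M : Matrix (Fin v) (Fin k) ℝ, Sᵀ * M = 0 → M.rank = k →
      LinearMap.range M.mulVecLin = K := by
    intro M hM hMr
    have hle : LinearMap.range M.mulVecLin ≤ K := by
      rintro y ⟨x, rfl⟩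
      show (Sᵀ).mulVecLin (M.mulVecLin x) = 0
      have : ((Sᵀ * M).mulVecLin) x = 0 := by rw [hM]; simp
      simpa [Matrix.mulVecLin_mul] using this
    exact Submodule.eq_of_le_of_finrank_eq hle (by rw [hKfin]; exact hMr)
  have hrange : LinearMap.range C.mulVecLin = LinearMap.range B.mulVecLin := by
    rw [key B hBS hBr, key C hCS hCr]
  set G := Bᵀ * B with hG
  have hGr : G.rank = k := by rw [hG, Matrix.rank_transpose_mul_self, hBr]
  have hGu : IsUnit G.det := isUnit_det_of_rank' G hGr
  set A := G⁻¹ * (Bᵀ * C) with hA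
  have hBA : B * A = C := by
    apply mat_ext'
    intro x
    have hx : C.mulVec x ∈ LinearMap.range B.mulVecLin := by
      rw [← hrange]; exact ⟨x, rfl⟩
    obtain ⟨y, hy⟩ := hx
    have hy' : B.mulVec y = C.mulVec x := hy
    calc (B * (G⁻¹ * (Bᵀ * C))).mulVec x
        = B.mulVec (G⁻¹.mulVec (Bᵀ.mulVec (C.mulVec x))) := by
          simp [← Matrix.mulVec_mulVec, Matrix.mul_assoc]
      _ = B.mulVec (G⁻¹.mulVec (Bᵀ.mulVec (B.mulVec y))) := by rw [hy']
      _ = B.mulVec ((G⁻¹ * (Bᵀ * B)).mulVec y) := by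
          simp [← Matrix.mulVec_mulVec]
      _ = B.mulVec y := by rw [← hG, Matrix.nonsing_inv_mul G hGu]; simp
      _ = C.mulVec x := hy'
  refine ⟨A, ?_, hBA⟩
  have h1 : (B * A).rank = k := by rw [hBA]; exact hCr
  have h2 := Matrix.rank_mul_le_right B A
  have h3 : A.rank ≤ k := le_trans (Matrix.rank_le_card_width A) (by simp)
  exact isUnit_det_of_rank' A (by omega)

set_option synthInstance.maxHeartbeats 1000000 in
private lemma gale_col {d v f : ℕ} (Z : Finset (Fin v))
    (S : Matrix (Fin v) (Fin f) ℝ) (hSr : S.rank = d + 1)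
    (hrows : finrank ℝ (Submodule.span ℝ ((fun i => S i) '' (Z : Set (Fin v)))) = d)
    (sj : Fin v → ℝ) (hsj : sj ∈ LinearMap.range S.mulVecLin)
    (hsjZ : ∀ i ∈ Z, sj i = 0) (hsjne : sj ≠ 0)
    (t : Fin v → ℝ) (ht : t ∈ LinearMap.range S.mulVecLin) (htZ : ∀ i ∈ Z, t i = 0) :
    ∃ c : ℝ, t = c • sj := by
  classical
  set Mj : Matrix {i // i ∈ Z} (Fin f) ℝ := Matrix.of (fun i x => S i.1 x) with hMj
  have hMjrank : Mj.rank = d := by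
    have hrange : Set.range Mj = (fun i => S i) '' (Z : Set (Fin v)) := by
      rw [show (Mj : _ → _) = (fun i => S i) ∘ Subtype.val from rfl, Set.range_comp,
        Subtype.range_val]
    have h1 : (Mjᵀ).rank = d := by
      rw [Matrix.rank, Matrix.range_mulVecLin, Matrix.col, Matrix.transpose_transpose, hrange, hrows]
    rw [← Matrix.rank_transpose, h1]
  set Uj := LinearMap.ker Mj.mulVecLin with hUj
  set Vj : Submodule ℝ (Fin v → ℝ) := Submodule.pi (↑Z) (fun _ => (⊥ : Submodule ℝ ℝ)) with hVj
  have hmemVj : ∀ y : Fin v → ℝ, y ∈ Vj ↔ ∀ i ∈ Z, y i = 0 := by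
    intro y
    simp [hVj, Submodule.mem_pi]
  have hUV : Uj = Vj.comap S.mulVecLin := by
    ext x
    simp only [hUj, LinearMap.mem_ker, Submodule.mem_comap, Matrix.mulVecLin_apply]
    rw [hmemVj]
    constructor
    · intro h i hi
      exact congrFun h ⟨i, hi⟩
    · intro h
      funext i
      exact h i.1 i.2
  have hW : Uj.map S.mulVecLin = LinearMap.range S.mulVecLin ⊓ Vj := by
    rw [hUV, Submodule.map_comap_eq]
  have hUfin : d + finrank ℝ Uj = f := by
    have := rank_nullity'' Mj
    rw [← hUj] at this
    omega
  have hkerS_le : LinearMap.ker S.mulVecLin ≤ Uj := by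
    intro x hx
    have hx' : S.mulVec x = 0 := hx
    show Mj.mulVecLin x = 0
    funext i
    have := congrFun hx' i.1
    simpa [hMj, Matrix.mulVec] using this
  have hkerS : (d + 1) + finrank ℝ (LinearMap.ker S.mulVecLin) = f := by
    have := rank_nullity'' S
    omega
  set g := S.mulVecLin.domRestrict Uj with hg
  have hrn := LinearMap.finrank_range_add_finrank_ker g
  have hrg : LinearMap.range g = Uj.map S.mulVecLin := LinearMap.range_domRestrict Uj S.mulVecLin
  have hkg : LinearMap.ker g = (LinearMap.ker S.mulVecLin).comap Uj.subtype :=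
    LinearMap.ker_domRestrict Uj S.mulVecLin
  have hkgfin : finrank ℝ (LinearMap.ker g) = finrank ℝ (LinearMap.ker S.mulVecLin) := by
    rw [hkg]
    exact (Submodule.comapSubtypeEquivOfLe hkerS_le).finrank_eq
  have hWfin : finrank ℝ (Uj.map S.mulVecLin) = 1 := by
    rw [← hrg]
    omega
  have hsjW : sj ∈ Uj.map S.mulVecLin := by
    rw [hW]
    exact ⟨hsj, (hmemVj sj).mpr hsjZ⟩
  have htW : t ∈ Uj.map S.mulVecLin := by
    rw [hW]
    exact ⟨ht, (hmemVj t).mpr htZ⟩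
  have hle : Submodule.span ℝ {sj} ≤ Uj.map S.mulVecLin := by
    rw [Submodule.span_le, Set.singleton_subset_iff]
    exact hsjW
  have hspan : Submodule.span ℝ {sj} = Uj.map S.mulVecLin :=
    Submodule.eq_of_le_of_finrank_eq hle (by rw [finrank_span_singleton hsjne, hWfin])
  rw [← hspan] at htW
  obtain ⟨c, hc⟩ := Submodule.mem_span_singleton.mp htW
  exact ⟨c, hc.symm⟩

/-- Remark (end of the Gale section): two elements of the slack variety differ by row and
column scaling iff their Gale transforms are related by a linear transformation together
with a nonzero scaling of the Gale vectors. -/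
theorem stmt7 (d v f : ℕ) (hd : 1 ≤ d) (hv : d + 1 < v)
    (Z : Fin f → Finset (Fin v)) (hZ : ∀ j, Z j ≠ Finset.univ)
    (𝒮 : Set (Matrix (Fin v) (Fin f) ℝ))
    (h𝒮 : 𝒮 = {S | S.rank = d + 1 ∧ ∀ i j, S i j = 0 ↔ i ∈ Z j})
    (S S' : Matrix (Fin v) (Fin f) ℝ) (hS : S ∈ 𝒮) (hS' : S' ∈ 𝒮)
    (hfacet : ∀ j, Module.finrank ℝ
      ↥(Submodule.span ℝ ((fun i => S i) '' (Z j : Set (Fin v)))) = d)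
    (B B' : Matrix (Fin v) (Fin (v - (d + 1))) ℝ)
    (hB : B.rank = v - (d + 1)) (hBS : Bᵀ * S = 0)
    (hB' : B'.rank = v - (d + 1)) (hB'S' : B'ᵀ * S' = 0) :
    (∃ dr : Fin v → ℝ, (∀ i, dr i ≠ 0) ∧
        ∃ lam : Fin f → ℝ, (∀ j, lam j ≠ 0) ∧
          S' = Matrix.diagonal dr * S * Matrix.diagonal lam) ↔
      ∃ D : Fin v → ℝ, (∀ i, D i ≠ 0) ∧
        ∃ A : Matrix (Fin (v - (d + 1))) (Fin (v - (d + 1))) ℝ, IsUnit A.det ∧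
          B' = Matrix.diagonal D * B * A := by
  classical
  subst h𝒮
  obtain ⟨hSrank, hSpat⟩ := hS
  obtain ⟨hS'rank, hS'pat⟩ := hS'
  constructor
  · rintro ⟨dr, hdr, lam, hlam, hSS'⟩
    have hdrdet : IsUnit (Matrix.diagonal dr).det := by
      rw [Matrix.det_diagonal]
      exact isUnit_iff_ne_zero.mpr (Finset.prod_ne_zero_iff.mpr fun i _ => hdr i)
    have hlamdet : IsUnit (Matrix.diagonal lam).det := by
      rw [Matrix.det_diagonal]
      exact isUnit_iff_ne_zero.mpr (Finset.prod_ne_zero_iff.mpr fun j _ => hlam j)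
    rw [hSS'] at hB'S'
    have h1 : B'ᵀ * (Matrix.diagonal dr * S) = 0 := by
      have h2 := congrArg (· * (Matrix.diagonal lam)⁻¹) hB'S'
      simpa [Matrix.mul_assoc, Matrix.mul_nonsing_inv _ hlamdet] using h2
    have hCS : Sᵀ * (Matrix.diagonal dr * B') = 0 := by
      have := congrArg Matrix.transpose h1
      simpa [Matrix.transpose_mul, Matrix.diagonal_transpose, Matrix.mul_assoc] using this
    have hBS2 : Sᵀ * B = 0 := by
      have := congrArg Matrix.transpose hBS
      simpa [Matrix.transpose_mul] using this
    have hCrank : (Matrix.diagonal dr * B').rank = v - (d + 1) := by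
      rw [Matrix.rank_mul_eq_right_of_isUnit_det _ _ hdrdet, hB']
    obtain ⟨A, hAdet, hBA⟩ := gale_factor (v := v) (k := v - (d + 1)) (r := d + 1)
      (by omega) S hSrank B (Matrix.diagonal dr * B') hB hCrank hBS2 hCS
    refine ⟨fun i => (dr i)⁻¹, fun i => inv_ne_zero (hdr i), A, hAdet, ?_⟩
    rw [Matrix.mul_assoc, hBA]
    ext i j
    rw [Matrix.diagonal_mul, Matrix.diagonal_mul]
    rw [← mul_assoc, inv_mul_cancel₀ (hdr i), one_mul]
  · rintro ⟨D, hD, A, hAdet, hB'eq⟩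
    rw [hB'eq] at hB'S'
    have hATdet : IsUnit Aᵀ.det := by rwa [Matrix.det_transpose]
    have h1 : Bᵀ * (Matrix.diagonal D * S') = 0 := by
      have h2 : Aᵀ * (Bᵀ * (Matrix.diagonal D * S')) = 0 := by
        simpa [Matrix.transpose_mul, Matrix.diagonal_transpose, Matrix.mul_assoc] using hB'S'
      have h3 := congrArg ((Aᵀ)⁻¹ * ·) h2
      simpa [← Matrix.mul_assoc, Matrix.nonsing_inv_mul _ hATdet] using h3
    have hkerfin : finrank ℝ (LinearMap.ker (Bᵀ).mulVecLin) = d + 1 := by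
      have h4 : (Bᵀ).rank = v - (d + 1) := by rw [Matrix.rank_transpose, hB]
      have := rank_nullity'' Bᵀ
      omega
    have hle : LinearMap.range S.mulVecLin ≤ LinearMap.ker (Bᵀ).mulVecLin := by
      rintro y ⟨x, rfl⟩
      show (Bᵀ).mulVecLin (S.mulVecLin x) = 0
      have : ((Bᵀ * S).mulVecLin) x = 0 := by rw [hBS]; simp
      simpa [Matrix.mulVecLin_mul] using this
    have hrangeS : LinearMap.range S.mulVecLin = LinearMap.ker (Bᵀ).mulVecLin :=
      Submodule.eq_of_le_of_finrank_eq hle (by rw [hkerfin]; exact hSrank)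
    have hcol : ∀ j, ∃ c : ℝ, c ≠ 0 ∧ ∀ i, D i * S' i j = c * S i j := by
      intro j
      set t : Fin v → ℝ := fun i => D i * S' i j with hts
      have htmem : t ∈ LinearMap.range S.mulVecLin := by
        rw [hrangeS]
        show (Bᵀ).mulVec t = 0
        have h2 : t = (Matrix.diagonal D * S').mulVec (Pi.single j 1) := by
          funext i
          simp [hts, Matrix.mulVec_single, Matrix.diagonal_mul]
        rw [h2, Matrix.mulVec_mulVec, h1]
        exact Matrix.zero_mulVec _
      set sj : Fin v → ℝ := fun i => S i j with hsjdef
      have hsjmem : sj ∈ LinearMap.range S.mulVecLin := by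
        refine ⟨Pi.single j 1, ?_⟩
        show S.mulVec (Pi.single j 1) = sj
        funext i
        simp [hsjdef, Matrix.mulVec_single]
      have hsjZ : ∀ i ∈ Z j, sj i = 0 := fun i hi => (hSpat i j).mpr hi
      obtain ⟨i0, hi0⟩ : ∃ i, i ∉ Z j := by
        by_contra h
        push_neg at h
        exact hZ j (Finset.eq_univ_iff_forall.mpr h)
      have hsjne : sj ≠ 0 := by
        intro h
        exact hi0 ((hSpat i0 j).mp (congrFun h i0))
      have htZ : ∀ i ∈ Z j, t i = 0 := by
        intro i hi
        simp [hts, (hS'pat i j).mpr hi]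
      obtain ⟨c, hc⟩ := gale_col (Z j) S hSrank (hfacet j) sj hsjmem hsjZ hsjne t htmem htZ
      refine ⟨c, ?_, fun i => by simpa [hts, hsjdef] using congrFun hc i⟩
      intro hc0
      have h3 : D i0 * S' i0 j = 0 := by
        have h4 := congrFun hc i0
        rw [hc0] at h4
        simpa [hts] using h4
      rcases mul_eq_zero.mp h3 with h | h
      · exact hD i0 h
      · exact hi0 ((hS'pat i0 j).mp h)
    choose lam hlam0 hlam using hcol
    refine ⟨fun i => (D i)⁻¹, fun i => inv_ne_zero (hD i), lam, hlam0, ?_⟩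
    ext i j
    rw [Matrix.mul_diagonal, Matrix.diagonal_mul]
    have h5 := hlam j i
    have h6 : S' i j = (D i)⁻¹ * (D i * S' i j) := by
      rw [← mul_assoc, inv_mul_cancel₀ (hD i), one_mul]
    rw [h6, h5]
    ring
end

section
/- There is no real 8×10 matrix S of rank 5 whose rows are indexed by the vertices 1,…,8 and whose columns are indexed by the 10 facets {1,2,3,4,5}, {1,2,3,4,6}, {1,2,5,7,8}, {1,2,6,7,8}, {1,4,5,6,8}, {3,4,5,7,8}, {2,3,5,7}, {2,3,6,7}, {3,4,6,7}, {4,6,7,8} of the first nonpolytopal 3-sphere of Altshuler and Steinberg, such that S_{ij} = 0 if vertex i belongs to facet j and S_{ij} ≠ 0 if vertex i does not belong to facet j. In particular, this 3-sphere is not realizable as the boundary of a 4-polytope. -/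
open Matrix

/-- The 10 facets (as vertex sets, with the paper's vertices `1,…,8` written as
`0,…,7 : Fin 8`) of the first nonpolytopal 3-sphere of Altshuler and Steinberg:
`12345, 12346, 12578, 12678, 14568, 34578, 2357, 2367, 3467, 4678`. -/
def sphereFacets : List (Finset (Fin 8)) := [
    {0, 1, 2, 3, 4},
    {0, 1, 2, 3, 5},
    {0, 1, 4, 6, 7},
    {0, 1, 5, 6, 7},
    {0, 3, 4, 5, 7},
    {2, 3, 4, 6, 7},
    {1, 2, 4, 6},
    {1, 2, 5, 6},
    {2, 3, 5, 6},
    {3, 5, 6, 7}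
  ]

/-- The facet indexed by `j : Fin 10`. -/
def sphereFacet (j : Fin 10) : Finset (Fin 8) :=
  sphereFacets.get (Fin.cast (by rfl) j)

private lemma aux_submatrix_rank (S : Matrix (Fin 8) (Fin 10) ℝ)
    (r : Fin 6 → Fin 8) (c : Fin 6 → Fin 10) :
    (S.submatrix r c).rank ≤ S.rank := by
  have h : S.submatrix r c =
      ((1 : Matrix (Fin 8) (Fin 8) ℝ).submatrix r id) *
        (S * ((1 : Matrix (Fin 10) (Fin 10) ℝ).submatrix id c)) := by
    ext i j
    simp [Matrix.mul_apply, Matrix.one_apply, Finset.sum_ite_eq, Finset.sum_ite_eq']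
  rw [h]
  exact le_trans (Matrix.rank_mul_le_right _ _)
    (Matrix.rank_mul_le_left _ _)

private lemma aux_minor_zero (S : Matrix (Fin 8) (Fin 10) ℝ) (h5 : S.rank = 5)
    (r : Fin 6 → Fin 8) (c : Fin 6 → Fin 10) :
    (S.submatrix r c).det = 0 := by
  by_contra hd
  have hu : IsUnit (S.submatrix r c) :=
    (Matrix.isUnit_iff_isUnit_det _).mpr (isUnit_iff_ne_zero.mpr hd)
  have hr := Matrix.rank_of_isUnit _ hu
  have hle := aux_submatrix_rank S r c
  rw [hr, h5] at hle
  norm_num at hle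

private lemma cons_val_five {α : Type*} {m : ℕ} (x : α) (u : Fin (m+5) → α) :
    Matrix.vecCons x u 5 = Matrix.vecHead (Matrix.vecTail (Matrix.vecTail (Matrix.vecTail (Matrix.vecTail u)))) := rfl
private lemma finCastSucc_1_0 : Fin.castSucc (0 : Fin 1) = (0 : Fin 2) := rfl
private lemma finSucc_1_0 : Fin.succ (0 : Fin 1) = (1 : Fin 2) := rfl
private lemma finCastSucc_2_0 : Fin.castSucc (0 : Fin 2) = (0 : Fin 3) := rfl
private lemma finSucc_2_0 : Fin.succ (0 : Fin 2) = (1 : Fin 3) := rfl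
private lemma finCastSucc_2_1 : Fin.castSucc (1 : Fin 2) = (1 : Fin 3) := rfl
private lemma finSucc_2_1 : Fin.succ (1 : Fin 2) = (2 : Fin 3) := rfl
private lemma finCastSucc_3_0 : Fin.castSucc (0 : Fin 3) = (0 : Fin 4) := rfl
private lemma finSucc_3_0 : Fin.succ (0 : Fin 3) = (1 : Fin 4) := rfl
private lemma finCastSucc_3_1 : Fin.castSucc (1 : Fin 3) = (1 : Fin 4) := rfl
private lemma finSucc_3_1 : Fin.succ (1 : Fin 3) = (2 : Fin 4) := rfl
private lemma finCastSucc_3_2 : Fin.castSucc (2 : Fin 3) = (2 : Fin 4) := rfl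
private lemma finSucc_3_2 : Fin.succ (2 : Fin 3) = (3 : Fin 4) := rfl
private lemma finCastSucc_4_0 : Fin.castSucc (0 : Fin 4) = (0 : Fin 5) := rfl
private lemma finSucc_4_0 : Fin.succ (0 : Fin 4) = (1 : Fin 5) := rfl
private lemma finCastSucc_4_1 : Fin.castSucc (1 : Fin 4) = (1 : Fin 5) := rfl
private lemma finSucc_4_1 : Fin.succ (1 : Fin 4) = (2 : Fin 5) := rfl
private lemma finCastSucc_4_2 : Fin.castSucc (2 : Fin 4) = (2 : Fin 5) := rfl
private lemma finSucc_4_2 : Fin.succ (2 : Fin 4) = (3 : Fin 5) := rfl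
private lemma finCastSucc_4_3 : Fin.castSucc (3 : Fin 4) = (3 : Fin 5) := rfl
private lemma finSucc_4_3 : Fin.succ (3 : Fin 4) = (4 : Fin 5) := rfl
private lemma finCastSucc_5_0 : Fin.castSucc (0 : Fin 5) = (0 : Fin 6) := rfl
private lemma finSucc_5_0 : Fin.succ (0 : Fin 5) = (1 : Fin 6) := rfl
private lemma finCastSucc_5_1 : Fin.castSucc (1 : Fin 5) = (1 : Fin 6) := rfl
private lemma finSucc_5_1 : Fin.succ (1 : Fin 5) = (2 : Fin 6) := rfl
private lemma finCastSucc_5_2 : Fin.castSucc (2 : Fin 5) = (2 : Fin 6) := rfl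
private lemma finSucc_5_2 : Fin.succ (2 : Fin 5) = (3 : Fin 6) := rfl
private lemma finCastSucc_5_3 : Fin.castSucc (3 : Fin 5) = (3 : Fin 6) := rfl
private lemma finSucc_5_3 : Fin.succ (3 : Fin 5) = (4 : Fin 6) := rfl
private lemma finCastSucc_5_4 : Fin.castSucc (4 : Fin 5) = (4 : Fin 6) := rfl
private lemma finSucc_5_4 : Fin.succ (4 : Fin 5) = (5 : Fin 6) := rfl
private lemma finVal_1_0 : ((0 : Fin 1) : Nat) = 0 := rfl
private lemma finVal_2_0 : ((0 : Fin 2) : Nat) = 0 := rfl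
private lemma finVal_2_1 : ((1 : Fin 2) : Nat) = 1 := rfl
private lemma finVal_3_0 : ((0 : Fin 3) : Nat) = 0 := rfl
private lemma finVal_3_1 : ((1 : Fin 3) : Nat) = 1 := rfl
private lemma finVal_3_2 : ((2 : Fin 3) : Nat) = 2 := rfl
private lemma finVal_4_0 : ((0 : Fin 4) : Nat) = 0 := rfl
private lemma finVal_4_1 : ((1 : Fin 4) : Nat) = 1 := rfl
private lemma finVal_4_2 : ((2 : Fin 4) : Nat) = 2 := rfl
private lemma finVal_4_3 : ((3 : Fin 4) : Nat) = 3 := rfl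
private lemma finVal_5_0 : ((0 : Fin 5) : Nat) = 0 := rfl
private lemma finVal_5_1 : ((1 : Fin 5) : Nat) = 1 := rfl
private lemma finVal_5_2 : ((2 : Fin 5) : Nat) = 2 := rfl
private lemma finVal_5_3 : ((3 : Fin 5) : Nat) = 3 := rfl
private lemma finVal_5_4 : ((4 : Fin 5) : Nat) = 4 := rfl
private lemma finVal_6_0 : ((0 : Fin 6) : Nat) = 0 := rfl
private lemma finVal_6_1 : ((1 : Fin 6) : Nat) = 1 := rfl
private lemma finVal_6_2 : ((2 : Fin 6) : Nat) = 2 := rfl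
private lemma finVal_6_3 : ((3 : Fin 6) : Nat) = 3 := rfl
private lemma finVal_6_4 : ((4 : Fin 6) : Nat) = 4 := rfl
private lemma finVal_6_5 : ((5 : Fin 6) : Nat) = 5 := rfl

set_option maxRecDepth 10000 in
set_option maxHeartbeats 1600000 in
/-- The first nonpolytopal 3-sphere of Altshuler and Steinberg has no (generalized) slack
matrix: there is no real `8 × 10` matrix of rank `5` whose `(i,j)` entry is zero when vertex
`i` lies on facet `j` and nonzero otherwise. In particular, this 3-sphere is not realizable
as the boundary of a 4-polytope. -/
theorem stmt10 :
    ¬ ∃ S : Matrix (Fin 8) (Fin 10) ℝ, S.rank = 5 ∧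
      ∀ (i : Fin 8) (j : Fin 10),
        (i ∈ sphereFacet j → S i j = 0) ∧ (i ∉ sphereFacet j → S i j ≠ 0) := by
  rintro ⟨S, h5, hS⟩
  have z : ∀ i j, i ∈ sphereFacet j → S i j = 0 := fun i j h => (hS i j).1 h
  have n : ∀ i j, i ∉ sphereFacet j → S i j ≠ 0 := fun i j h => (hS i j).2 h
  have z00 : S 0 0 = 0 := z 0 0 (by decide)
  have z01 : S 0 1 = 0 := z 0 1 (by decide)
  have z02 : S 0 2 = 0 := z 0 2 (by decide)
  have z03 : S 0 3 = 0 := z 0 3 (by decide)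
  have z04 : S 0 4 = 0 := z 0 4 (by decide)
  have z10 : S 1 0 = 0 := z 1 0 (by decide)
  have z11 : S 1 1 = 0 := z 1 1 (by decide)
  have z12 : S 1 2 = 0 := z 1 2 (by decide)
  have z13 : S 1 3 = 0 := z 1 3 (by decide)
  have z20 : S 2 0 = 0 := z 2 0 (by decide)
  have z21 : S 2 1 = 0 := z 2 1 (by decide)
  have z25 : S 2 5 = 0 := z 2 5 (by decide)
  have z28 : S 2 8 = 0 := z 2 8 (by decide)
  have z30 : S 3 0 = 0 := z 3 0 (by decide)
  have z31 : S 3 1 = 0 := z 3 1 (by decide)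
  have z34 : S 3 4 = 0 := z 3 4 (by decide)
  have z35 : S 3 5 = 0 := z 3 5 (by decide)
  have z38 : S 3 8 = 0 := z 3 8 (by decide)
  have z40 : S 4 0 = 0 := z 4 0 (by decide)
  have z42 : S 4 2 = 0 := z 4 2 (by decide)
  have z44 : S 4 4 = 0 := z 4 4 (by decide)
  have z45 : S 4 5 = 0 := z 4 5 (by decide)
  have z51 : S 5 1 = 0 := z 5 1 (by decide)
  have z53 : S 5 3 = 0 := z 5 3 (by decide)
  have z54 : S 5 4 = 0 := z 5 4 (by decide)
  have z62 : S 6 2 = 0 := z 6 2 (by decide)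
  have z63 : S 6 3 = 0 := z 6 3 (by decide)
  have z65 : S 6 5 = 0 := z 6 5 (by decide)
  have z68 : S 6 8 = 0 := z 6 8 (by decide)
  have z72 : S 7 2 = 0 := z 7 2 (by decide)
  have z73 : S 7 3 = 0 := z 7 3 (by decide)
  have z74 : S 7 4 = 0 := z 7 4 (by decide)
  have z75 : S 7 5 = 0 := z 7 5 (by decide)
  -- Two vanishing 6×6 minors suffice for a contradiction.
  have hd1 := aux_minor_zero S h5 ![0,1,2,3,4,5] ![0,1,2,3,4,5]
  have hd2 := aux_minor_zero S h5 ![0,2,3,4,6,7] ![0,2,3,4,5,8]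
  have e1 : S.submatrix ![0,1,2,3,4,5] ![0,1,2,3,4,5] = Matrix.of ![![S 0 0, S 0 1, S 0 2, S 0 3, S 0 4, S 0 5], ![S 1 0, S 1 1, S 1 2, S 1 3, S 1 4, S 1 5], ![S 2 0, S 2 1, S 2 2, S 2 3, S 2 4, S 2 5], ![S 3 0, S 3 1, S 3 2, S 3 3, S 3 4, S 3 5], ![S 4 0, S 4 1, S 4 2, S 4 3, S 4 4, S 4 5], ![S 5 0, S 5 1, S 5 2, S 5 3, S 5 4, S 5 5]] := by
    ext i j; fin_cases i <;> fin_cases j <;> rfl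
  have e2 : S.submatrix ![0,2,3,4,6,7] ![0,2,3,4,5,8] = Matrix.of ![![S 0 0, S 0 2, S 0 3, S 0 4, S 0 5, S 0 8], ![S 2 0, S 2 2, S 2 3, S 2 4, S 2 5, S 2 8], ![S 3 0, S 3 2, S 3 3, S 3 4, S 3 5, S 3 8], ![S 4 0, S 4 2, S 4 3, S 4 4, S 4 5, S 4 8], ![S 6 0, S 6 2, S 6 3, S 6 4, S 6 5, S 6 8], ![S 7 0, S 7 2, S 7 3, S 7 4, S 7 5, S 7 8]] := by
    ext i j; fin_cases i <;> fin_cases j <;> rfl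
  rw [e1] at hd1
  rw [e2] at hd2
  simp only [Matrix.det_succ_row_zero, Fin.sum_univ_succ, Fin.sum_univ_zero, Matrix.det_fin_zero, Matrix.submatrix_apply, Matrix.of_apply, Fin.succ_succAbove_zero, Fin.succ_succAbove_succ, Fin.zero_succAbove, Matrix.cons_val_zero, Matrix.cons_val_succ] at hd1 hd2
  norm_num [z00, z01, z02, z03, z04, z10, z11, z12, z13, z20, z21, z25, z28, z30, z31, z34, z35, z38, z40, z42, z44, z45, z51, z53, z54, z62, z63, z65, z68, z72, z73, z74, z75] at hd1 hd2
  have n05 : S 0 5 ≠ 0 := n 0 5 (by decide)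
  have n14 : S 1 4 ≠ 0 := n 1 4 (by decide)
  have n24 : S 2 4 ≠ 0 := n 2 4 (by decide)
  have n32 : S 3 2 ≠ 0 := n 3 2 (by decide)
  have n41 : S 4 1 ≠ 0 := n 4 1 (by decide)
  have n43 : S 4 3 ≠ 0 := n 4 3 (by decide)
  have n50 : S 5 0 ≠ 0 := n 5 0 (by decide)
  have n60 : S 6 0 ≠ 0 := n 6 0 (by decide)
  have n78 : S 7 8 ≠ 0 := n 7 8 (by decide)
  rcases hd1 with h | hd1
  · exact n05 h
  rcases hd1 with h | hd1
  · exact n14 h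
  have h1 : S 2 2 * S 3 3 - S 2 3 * S 3 2 = 0 := by
    have hp : S 4 1 * S 5 0 ≠ 0 := mul_ne_zero n41 n50
    have hx : (S 4 1 * S 5 0) * (S 2 2 * S 3 3 - S 2 3 * S 3 2) = 0 := by
      linear_combination -hd1
    exact (mul_eq_zero.mp hx).resolve_left hp
  rcases hd2 with h | hd2
  · exact n05 h
  have h2 : S 2 4 * S 3 2 * S 4 3 * S 6 0 * S 7 8 = 0 := by
    linear_combination -hd2 - (S 4 8 * S 6 4 * S 7 0) * h1
  exact (mul_ne_zero (mul_ne_zero (mul_ne_zero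
    (mul_ne_zero n24 n32) n43) n60) n78) h2
end
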